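/- Let k be a field containing a primitive third root of unity r (so r² + r + 1 = 0 and 3 ≠ 0 in k). In any k-algebra with elements a, x satisfying a³ = 1, the identity a·F = r²·F·a holds, where F := xa + (r+1)ax + ((r+2)/3)(a - a²). -/

import Mathlib

theorem aF_eq_r_sq_Fa
    {k : Type*} [Field k] (r : k) (h3 : (3 : k) ≠ 0)
    (hr : r ^ 2 + r + 1 = 0) (hr1 : r ≠ 1)
    {A : Type*} [Ring A] [Algebra k A] (a x : A)
    (ha3 : a ^ 3 = 1)
    (hlin : x + a * x * a ^ 2 + a ^ 2 * x * a - a + 1 = 0)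
    (F : A)
    (hF : F = x * a + (r + 1) • (a * x) + ((r + 2) / 3) • (a - a ^ 2)) :
    a * F = r ^ 2 • (F * a) := by
  have hr3 : r ^ 3 = 1 := by linear_combination (r - 1) * hr
  have h0 : a * (x + a * x * a ^ 2 + a ^ 2 * x * a - a + 1) * a = 0 := by
    rw [hlin]; simp
  have h2 : a * x * a + a ^ 2 * x * a ^ 3 + a ^ 3 * x * a ^ 2 - a ^ 3 + a ^ 2 = 0 := by
    rw [← h0]; noncomm_ring
  rw [ha3] at h2
  simp only [mul_one, one_mul] at h2
  have key : a * x * a = 1 - a ^ 2 - a ^ 2 * x - x * a ^ 2 := by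
    have h4 : a * x * a - (1 - a ^ 2 - a ^ 2 * x - x * a ^ 2) = 0 := by
      rw [← h2]; abel
    exact sub_eq_zero.mp h4
  subst hF
  have e1 : a * (x * a) = a * x * a := by noncomm_ring
  have e2 : a * (a * x) = a ^ 2 * x := by noncomm_ring
  have e3 : a * (a - a ^ 2) = a ^ 2 - 1 := by
    have : a * (a - a ^ 2) = a ^ 2 - a ^ 3 := by noncomm_ring
    rw [this, ha3]
  have e4 : x * a * a = x * a ^ 2 := by noncomm_ring
  have e5 : a * x * a = a * x * a := rfl
  have e6 : (a - a ^ 2) * a = a ^ 2 - 1 := by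
    have : (a - a ^ 2) * a = a ^ 2 - a ^ 3 := by noncomm_ring
    rw [this, ha3]
  simp only [mul_add, add_mul, mul_smul_comm, smul_mul_assoc, e1, e2, e3, e4, e6, key]
  match_scalars <;> field_simp
  · linear_combination (1 - 2 * r) * hr
  · linear_combination (2 * r - 1) * hr
  · linear_combination r * hr
  · linear_combination (1 - r) * hr + 2 * hr3
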